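/- Assume that max{Re λ : λ ∈ σ(B)} ≥ 0, where σ(B) is the set of complex eigenvalues of B. Then there exists a constant c₀ > 0 such that V(t) ≥ c₀·√t for all t ≥ 1, where V(t) = ω_N · det(tK(t))^{1/2}. -/

import Mathlib

open MeasureTheory Filter Matrix Real
open scoped Topology ENNReal NNReal

noncomputable section

/-- The matrix `t·K(t) = ∫₀ᵗ e^{sB} Q e^{sBᵀ} ds`, defined entrywise. -/
def tK {N : ℕ} (Q B : Matrix (Fin N) (Fin N) ℝ) (t : ℝ) : Matrix (Fin N) (Fin N) ℝ :=
  Matrix.of fun i j =>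
    ∫ s in (0:ℝ)..t, (NormedSpace.exp (s • B) * Q * NormedSpace.exp (s • Bᵀ)) i j

/-- The covariance matrix `K(t) = (1/t)∫₀ᵗ e^{sB} Q e^{sBᵀ} ds`. -/
def Kmat {N : ℕ} (Q B : Matrix (Fin N) (Fin N) ℝ) (t : ℝ) : Matrix (Fin N) (Fin N) ℝ :=
  t⁻¹ • tK Q B t

/-- The Hörmander hypoellipticity condition: `K(t) > 0` for every `t > 0`. -/
def Hormander {N : ℕ} (Q B : Matrix (Fin N) (Fin N) ℝ) : Prop :=
  ∀ t > 0, (Kmat Q B t).PosDef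

/-- The Hörmander heat kernel
`p(X,Y,t) = (4π)^{-N/2} det(tK(t))^{-1/2} exp(-(1/(4t))⟨K(t)⁻¹(Y-e^{tB}X), Y-e^{tB}X⟩)`. -/
def hormKernel {N : ℕ} (Q B : Matrix (Fin N) (Fin N) ℝ) (X Y : Fin N → ℝ) (t : ℝ) : ℝ :=
  (4 * π) ^ (-(N : ℝ) / 2) * ((tK Q B t).det) ^ (-(1:ℝ)/2) *
    Real.exp (-(1 / (4 * t)) *
      ((Kmat Q B t)⁻¹.mulVec (Y - (NormedSpace.exp (t • B)).mulVec X) ⬝ᵥ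
        (Y - (NormedSpace.exp (t • B)).mulVec X)))

/-- `∫_S t^{-sp/2-1} ∫∫ p(X,Y,t)|f(Y)-f(X)|^p`, i.e. the `p`-th power of the part of the
Besov seminorm where the time variable ranges in `S`. -/
def besovEnergyOn {N : ℕ} (Q B : Matrix (Fin N) (Fin N) ℝ) (s p : ℝ)
    (f : (Fin N → ℝ) → ℝ) (S : Set ℝ) : ℝ≥0∞ :=
  ∫⁻ t in S, ∫⁻ X, ∫⁻ Y,
    ENNReal.ofReal (t ^ (-(s * p) / 2 - 1) * hormKernel Q B X Y t * |f Y - f X| ^ p)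

/-- `N_{s,p}(f)^p`, the `p`-th power of the Besov seminorm. -/
def besovEnergy {N : ℕ} (Q B : Matrix (Fin N) (Fin N) ℝ) (s p : ℝ)
    (f : (Fin N → ℝ) → ℝ) : ℝ≥0∞ := besovEnergyOn Q B s p f (Set.Ioi 0)

/-- Membership in the Besov space `𝔅_{s,p}`: `f ∈ Lᵖ` and `N_{s,p}(f) < ∞`. -/
def MemBesov {N : ℕ} (Q B : Matrix (Fin N) (Fin N) ℝ) (s p : ℝ)
    (f : (Fin N → ℝ) → ℝ) : Prop :=
  MemLp f (ENNReal.ofReal p) volume ∧ besovEnergy Q B s p f < ⊤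

/-- The `Lᵖ` norm `‖f‖_{Lᵖ}` (as a real number). -/
def lpNorm {N : ℕ} (p : ℝ) (f : (Fin N → ℝ) → ℝ) : ℝ :=
  (eLpNorm f (ENNReal.ofReal p) volume).toReal

/-- The Hörmander semigroup `P_t f(X) = ∫ p(X,Y,t) f(Y) dY`. -/
def Pt {N : ℕ} (Q B : Matrix (Fin N) (Fin N) ℝ) (f : (Fin N → ℝ) → ℝ)
    (X : Fin N → ℝ) (t : ℝ) : ℝ := ∫ Y, hormKernel Q B X Y t * f Y

/-- The fractional power `(-𝒜)^s f(X) = -(s/Γ(1-s)) ∫₀^∞ t^{-1-s}(P_t f(X) - f(X)) dt`. -/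
def fracPow {N : ℕ} (Q B : Matrix (Fin N) (Fin N) ℝ) (s : ℝ) (f : (Fin N → ℝ) → ℝ)
    (X : Fin N → ℝ) : ℝ :=
  -(s / Real.Gamma (1 - s)) * ∫ t in Set.Ioi (0:ℝ), t ^ (-1 - s) * (Pt Q B f X t - f X)

/-- The operator norm `‖M‖ = sup_{|X|=1} |MX|` of a matrix acting on Euclidean space. -/
def opNorm {N : ℕ} (M : Matrix (Fin N) (Fin N) ℝ) : ℝ :=
  ‖(Matrix.toEuclideanCLM (𝕜 := ℝ) M : EuclideanSpace ℝ (Fin N) →L[ℝ] EuclideanSpace ℝ (Fin N))‖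

/-- The volume function `V(t) = ω_N det(tK(t))^{1/2}`. -/
def volFun {N : ℕ} (Q B : Matrix (Fin N) (Fin N) ℝ) (t : ℝ) : ℝ :=
  (volume (Metric.ball (0 : EuclideanSpace ℝ (Fin N)) 1)).toReal * Real.sqrt ((tK Q B t).det)

/-- `K_∞ = ∫₀^∞ e^{sB} Q e^{sBᵀ} ds`, defined entrywise. -/
def Kinf {N : ℕ} (Q B : Matrix (Fin N) (Fin N) ℝ) : Matrix (Fin N) (Fin N) ℝ :=
  Matrix.of fun i j =>
    ∫ s in Set.Ioi (0:ℝ), (NormedSpace.exp (s • B) * Q * NormedSpace.exp (s • Bᵀ)) i j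


namespace Prop23Aux

attribute [local instance] Matrix.linftyOpNormedRing Matrix.linftyOpNormedAlgebra

lemma exp_mulVec_eigen {N : ℕ} (M : Matrix (Fin N) (Fin N) ℂ) (v : Fin N → ℂ) (μ : ℂ)
    (hv : M *ᵥ v = μ • v) :
    NormedSpace.exp M *ᵥ v = Complex.exp μ • v := by
  have hpow : ∀ n : ℕ, M ^ n *ᵥ v = μ ^ n • v := by
    intro n
    induction n with
    | zero => simp
    | succ n ih =>
      rw [pow_succ, ← Matrix.mulVec_mulVec, hv, Matrix.mulVec_smul, ih, smul_smul, pow_succ,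
        mul_comm μ]
  let L : Matrix (Fin N) (Fin N) ℂ →ₗ[ℂ] (Fin N → ℂ) :=
    { toFun := fun A => A *ᵥ v
      map_add' := fun A B => Matrix.add_mulVec A B v
      map_smul' := fun c A => by simp [Matrix.smul_mulVec] }
  have hLc : Continuous L := L.continuous_of_finiteDimensional
  let Lc : Matrix (Fin N) (Fin N) ℂ →L[ℂ] (Fin N → ℂ) := ⟨L, hLc⟩
  have h1 : NormedSpace.exp M *ᵥ v = Lc (NormedSpace.exp M) := rfl
  rw [h1, NormedSpace.exp_eq_tsum ℂ]
  rw [Lc.map_tsum (NormedSpace.expSeries_summable' (𝕂 := ℂ) M)]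
  have h2 : ∀ n : ℕ, Lc (((Nat.factorial n : ℂ))⁻¹ • M ^ n)
      = (((Nat.factorial n : ℂ))⁻¹ * μ ^ n) • v := by
    intro n
    have : Lc (((Nat.factorial n : ℂ))⁻¹ • M ^ n)
        = ((Nat.factorial n : ℂ))⁻¹ • (M ^ n *ᵥ v) := _root_.map_smul Lc _ _
    rw [this, hpow, smul_smul]
  simp_rw [h2]
  have h3 : Complex.exp μ = ∑' n : ℕ, ((Nat.factorial n : ℂ))⁻¹ * μ ^ n := by
    rw [Complex.exp_eq_exp_ℂ, NormedSpace.exp_eq_tsum ℂ]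
    simp [smul_eq_mul]
  rw [h3, ← Summable.tsum_smul_const ?_]
  have := (NormedSpace.expSeries_summable' (𝕂 := ℂ) μ)
  simpa [smul_eq_mul] using this

lemma exp_map_ofReal {N : ℕ} (M : Matrix (Fin N) (Fin N) ℝ) :
    (NormedSpace.exp M).map (Complex.ofReal : ℝ → ℂ)
      = NormedSpace.exp (M.map (Complex.ofReal : ℝ → ℂ)) := by
  have hcont : Continuous (Complex.ofRealHom.mapMatrix :
      Matrix (Fin N) (Fin N) ℝ →+* Matrix (Fin N) (Fin N) ℂ) :=
    Continuous.matrix_map continuous_id Complex.continuous_ofReal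
  have h := NormedSpace.map_exp (Complex.ofRealHom.mapMatrix :
      Matrix (Fin N) (Fin N) ℝ →+* Matrix (Fin N) (Fin N) ℂ) hcont M
  exact h

lemma exp_cont {N : ℕ} (B : Matrix (Fin N) (Fin N) ℝ) :
    Continuous fun s : ℝ => NormedSpace.exp (s • B) :=
  NormedSpace.exp_continuous.comp (continuous_id.smul continuous_const)

lemma entry_cont {N : ℕ} (Q B : Matrix (Fin N) (Fin N) ℝ) (i j : Fin N) :
    Continuous fun s : ℝ =>
      (NormedSpace.exp (s • B) * Q * NormedSpace.exp (s • Bᵀ)) i j := by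
  have hF : Continuous fun s : ℝ =>
      NormedSpace.exp (s • B) * Q * NormedSpace.exp (s • Bᵀ) :=
    ((exp_cont B).matrix_mul continuous_const).matrix_mul (exp_cont Bᵀ)
  exact (continuous_apply j).comp ((continuous_apply i).comp hF)

lemma quadform_cont {N : ℕ} (Q B : Matrix (Fin N) (Fin N) ℝ) (x : Fin N → ℝ) :
    Continuous fun s : ℝ =>
      x ⬝ᵥ ((NormedSpace.exp (s • B) * Q * NormedSpace.exp (s • Bᵀ)) *ᵥ x) := by
  have : (fun s : ℝ =>
      x ⬝ᵥ ((NormedSpace.exp (s • B) * Q * NormedSpace.exp (s • Bᵀ)) *ᵥ x))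
      = fun s : ℝ => ∑ i, x i * ∑ j,
        (NormedSpace.exp (s • B) * Q * NormedSpace.exp (s • Bᵀ)) i j * x j := by
    ext s; simp [dotProduct, Matrix.mulVec]
  rw [this]
  exact continuous_finset_sum _ fun i _ => continuous_const.mul
    (continuous_finset_sum _ fun j _ => (entry_cont Q B i j).mul continuous_const)

lemma quad_integral {N : ℕ} (Q B : Matrix (Fin N) (Fin N) ℝ) (t : ℝ) (x : Fin N → ℝ) :
    x ⬝ᵥ ((Matrix.of fun i j => ∫ s in (0:ℝ)..t,
        (NormedSpace.exp (s • B) * Q * NormedSpace.exp (s • Bᵀ)) i j) *ᵥ x)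
      = ∫ s in (0:ℝ)..t,
        x ⬝ᵥ ((NormedSpace.exp (s • B) * Q * NormedSpace.exp (s • Bᵀ)) *ᵥ x) := by
  simp only [dotProduct, Matrix.mulVec, Matrix.of_apply]
  rw [intervalIntegral.integral_finset_sum]
  · refine Finset.sum_congr rfl fun i _ => ?_
    rw [intervalIntegral.integral_const_mul]
    congr 1
    rw [intervalIntegral.integral_finset_sum]
    · exact Finset.sum_congr rfl fun j _ => by rw [intervalIntegral.integral_mul_const]
    · exact fun j _ => ((entry_cont Q B i j).mul continuous_const).intervalIntegrable _ _
  · intro i _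
    exact (continuous_const.mul (continuous_finset_sum _ fun j _ =>
      ((entry_cont Q B i j).mul continuous_const))).intervalIntegrable _ _

lemma quad_G_nonneg {N : ℕ} {Q : Matrix (Fin N) (Fin N) ℝ} (hQ : Q.PosSemidef)
    (B : Matrix (Fin N) (Fin N) ℝ) (s : ℝ) (x : Fin N → ℝ) :
    0 ≤ x ⬝ᵥ ((NormedSpace.exp (s • B) * Q * NormedSpace.exp (s • Bᵀ)) *ᵥ x) := by
  rw [show s • Bᵀ = (s • B)ᵀ from (Matrix.transpose_smul s B).symm, Matrix.exp_transpose,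
    ← Matrix.mulVec_mulVec, ← Matrix.mulVec_mulVec,
    Matrix.dotProduct_mulVec x, ← Matrix.mulVec_transpose]
  simpa using hQ.dotProduct_mulVec_nonneg ((NormedSpace.exp (s • B))ᵀ *ᵥ x)

lemma re_quad {N : ℕ} (M : Matrix (Fin N) (Fin N) ℝ) (v : Fin N → ℂ) :
    (star v ⬝ᵥ ((M.map (Complex.ofReal : ℝ → ℂ)) *ᵥ v)).re
      = (fun i => (v i).re) ⬝ᵥ (M *ᵥ fun i => (v i).re)
        + (fun i => (v i).im) ⬝ᵥ (M *ᵥ fun i => (v i).im) := by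
  simp only [dotProduct, Matrix.mulVec, Pi.star_apply, Matrix.map_apply]
  rw [Complex.re_sum, ← Finset.sum_add_distrib]
  congr 1; ext i
  rw [Finset.mul_sum, Complex.re_sum, Finset.mul_sum, Finset.mul_sum, ← Finset.sum_add_distrib]
  congr 1; ext j
  simp [Complex.mul_re, RCLike.star_def, Complex.conj_re, Complex.conj_im]

lemma F_formula {N : ℕ} (Q B : Matrix (Fin N) (Fin N) ℝ) (μ : ℂ) (v : Fin N → ℂ)
    (hv : (B.map (Complex.ofReal : ℝ → ℂ))ᵀ *ᵥ v = μ • v) (s : ℝ) :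
    (fun i => (v i).re) ⬝ᵥ ((NormedSpace.exp (s • B) * Q * NormedSpace.exp (s • Bᵀ))
        *ᵥ fun i => (v i).re)
      + (fun i => (v i).im) ⬝ᵥ ((NormedSpace.exp (s • B) * Q * NormedSpace.exp (s • Bᵀ))
        *ᵥ fun i => (v i).im)
    = Real.exp (2 * s * μ.re) *
      ((fun i => (v i).re) ⬝ᵥ (Q *ᵥ fun i => (v i).re)
        + (fun i => (v i).im) ⬝ᵥ (Q *ᵥ fun i => (v i).im)) := by
  set Bc := B.map (Complex.ofReal : ℝ → ℂ) with hBc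
  set Qc := Q.map (Complex.ofReal : ℝ → ℂ) with hQc
  rw [← re_quad, ← re_quad]
  have hmain : star v ⬝ᵥ (((NormedSpace.exp (s • B) * Q * NormedSpace.exp (s • Bᵀ)).map
      (Complex.ofReal : ℝ → ℂ)) *ᵥ v)
      = ((Real.exp (2 * s * μ.re) : ℝ) : ℂ) * (star v ⬝ᵥ (Qc *ᵥ v)) := by
    have hsmulmap : ∀ A : Matrix (Fin N) (Fin N) ℝ,
        (s • A).map (Complex.ofReal : ℝ → ℂ) = (s : ℂ) • A.map (Complex.ofReal : ℝ → ℂ) := by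
      intro A; ext i j; simp [Complex.ofReal_mul]
    have hmul : (NormedSpace.exp (s • B) * Q * NormedSpace.exp (s • Bᵀ)).map
        (Complex.ofReal : ℝ → ℂ)
        = NormedSpace.exp ((s:ℂ) • Bc) * Qc * NormedSpace.exp ((s:ℂ) • Bcᵀ) := by
      rw [show ((NormedSpace.exp (s • B) * Q * NormedSpace.exp (s • Bᵀ)).map
          (Complex.ofReal : ℝ → ℂ))
          = (Complex.ofRealHom.mapMatrix
            (NormedSpace.exp (s • B) * Q * NormedSpace.exp (s • Bᵀ))) from rfl]
      rw [_root_.map_mul, _root_.map_mul]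
      have e1 : (Complex.ofRealHom.mapMatrix (NormedSpace.exp (s • B))
          : Matrix (Fin N) (Fin N) ℂ) = NormedSpace.exp ((s:ℂ) • Bc) := by
        show (NormedSpace.exp (s • B)).map (Complex.ofReal : ℝ → ℂ) = _
        rw [exp_map_ofReal, hsmulmap]
      have e2 : (Complex.ofRealHom.mapMatrix (NormedSpace.exp (s • Bᵀ))
          : Matrix (Fin N) (Fin N) ℂ) = NormedSpace.exp ((s:ℂ) • Bcᵀ) := by
        show (NormedSpace.exp (s • Bᵀ)).map (Complex.ofReal : ℝ → ℂ) = _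
        rw [exp_map_ofReal, hsmulmap, Matrix.transpose_map]
      rw [e1, e2]; rfl
    rw [hmul]
    have hv2 : ((s:ℂ) • Bcᵀ) *ᵥ v = ((s:ℂ) * μ) • v := by
      rw [Matrix.smul_mulVec, hv, smul_smul]
    have hstarv : Bcᵀ *ᵥ star v = (starRingEnd ℂ μ) • star v := by
      have h1 : star (Bcᵀ *ᵥ v) = star v ᵥ* (Bcᵀ)ᴴ := Matrix.star_mulVec _ _
      have h2 : (Bcᵀ)ᴴ = Bc := by
        ext i j; simp [Matrix.conjTranspose_apply, hBc]
      have h3 : star v ᵥ* Bc = Bcᵀ *ᵥ star v := (Matrix.mulVec_transpose _ _).symm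
      rw [h2, h3] at h1
      rw [← h1, hv, star_smul]; rfl
    have hv3 : ((s:ℂ) • Bcᵀ) *ᵥ star v = ((s:ℂ) * starRingEnd ℂ μ) • star v := by
      rw [Matrix.smul_mulVec, hstarv, smul_smul]
    have he1 : NormedSpace.exp ((s:ℂ) • Bcᵀ) *ᵥ v = Complex.exp ((s:ℂ) * μ) • v :=
      exp_mulVec_eigen _ _ _ hv2
    have he2 : NormedSpace.exp ((s:ℂ) • Bcᵀ) *ᵥ star v
        = Complex.exp ((s:ℂ) * starRingEnd ℂ μ) • star v :=
      exp_mulVec_eigen _ _ _ hv3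
    rw [← Matrix.mulVec_mulVec, ← Matrix.mulVec_mulVec, he1, Matrix.mulVec_smul,
      Matrix.dotProduct_mulVec _ (NormedSpace.exp ((s:ℂ) • Bc)), ← Matrix.mulVec_transpose,
      ← Matrix.exp_transpose, Matrix.transpose_smul, he2]
    rw [smul_dotProduct, dotProduct_smul, smul_smul, smul_eq_mul]
    congr 1
    rw [← Complex.exp_add]
    have : (s:ℂ) * starRingEnd ℂ μ + (s:ℂ) * μ = ((2 * s * μ.re : ℝ) : ℂ) := by
      rw [← mul_add, add_comm ((starRingEnd ℂ) μ), Complex.add_conj]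
      push_cast
      ring
    rw [this, Complex.ofReal_exp]
  rw [hmain]
  simp only [Complex.mul_re, Complex.ofReal_re, Complex.ofReal_im, zero_mul, sub_zero, hQc]

lemma quad_decomp {N : ℕ} {M : Matrix (Fin N) (Fin N) ℝ} (hM : M.IsHermitian) (x : Fin N → ℝ) :
    ∃ y : Fin N → ℝ, y ⬝ᵥ y = x ⬝ᵥ x ∧
      x ⬝ᵥ (M *ᵥ x) = ∑ i, hM.eigenvalues i * (y i)^2 := by
  set U : Matrix (Fin N) (Fin N) ℝ := (hM.eigenvectorUnitary : Matrix (Fin N) (Fin N) ℝ)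
    with hUdef
  have hU : U * star U = 1 := (Matrix.mem_unitaryGroup_iff).mp hM.eigenvectorUnitary.2
  have hsU : star U = Uᵀ := by
    ext i j; simp [Matrix.conjTranspose_apply]
  refine ⟨star U *ᵥ x, ?_, ?_⟩
  · rw [hsU]
    rw [Matrix.dotProduct_mulVec, Matrix.vecMul_transpose, Matrix.mulVec_mulVec, ← hsU, hU,
      Matrix.one_mulVec]
  · conv_lhs => rw [hM.spectral_theorem, Unitary.conjStarAlgAut_apply]
    rw [← Matrix.mulVec_mulVec, ← Matrix.mulVec_mulVec, Matrix.dotProduct_mulVec x U,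
      ← Matrix.mulVec_transpose, ← hsU]
    have hdiag : Matrix.diagonal (RCLike.ofReal ∘ hM.eigenvalues) *ᵥ (star U *ᵥ x)
        = fun i => hM.eigenvalues i * (star U *ᵥ x) i := by
      ext i; simp [Matrix.mulVec_diagonal]
    rw [hdiag]
    simp only [dotProduct]
    congr 1; ext i; ring

lemma det_eq_prod_real {N : ℕ} {M : Matrix (Fin N) (Fin N) ℝ} (hM : M.IsHermitian) :
    M.det = ∏ i, hM.eigenvalues i := by
  simpa using hM.det_eq_prod_eigenvalues

lemma eig_eq_real {N : ℕ} {M : Matrix (Fin N) (Fin N) ℝ} (hM : M.IsHermitian) (i : Fin N) :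
    hM.eigenvalues i = (⇑(hM.eigenvectorBasis i) : Fin N → ℝ) ⬝ᵥ (M *ᵥ ⇑(hM.eigenvectorBasis i)) := by
  simpa using hM.eigenvalues_eq i

lemma eigbasis_dot_one {N : ℕ} {M : Matrix (Fin N) (Fin N) ℝ} (hM : M.IsHermitian) (i : Fin N) :
    (⇑(hM.eigenvectorBasis i) : Fin N → ℝ) ⬝ᵥ ⇑(hM.eigenvectorBasis i) = 1 := by
  have h1 : ‖hM.eigenvectorBasis i‖ = 1 := hM.eigenvectorBasis.orthonormal.1 i
  rw [EuclideanSpace.norm_eq] at h1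
  have h2 : ∑ j, (hM.eigenvectorBasis i) j ^ 2 = 1 := by
    have := congrArg (fun x : ℝ => x ^ 2) h1
    simpa [Real.sq_sqrt (Finset.sum_nonneg fun j _ => sq_nonneg _)] using this
  rw [show ((⇑(hM.eigenvectorBasis i) : Fin N → ℝ) ⬝ᵥ ⇑(hM.eigenvectorBasis i))
    = ∑ j, (hM.eigenvectorBasis i) j ^ 2 from by simp [dotProduct, pow_two]]
  exact h2

end Prop23Aux

open Prop23Aux in

/-- If `max{Re λ : λ ∈ σ(B)} ≥ 0`, then `V(t) ≥ c₀√t` for `t ≥ 1` (Proposition 2.3(i)). -/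
theorem statement1 {N : ℕ} (hN : 1 ≤ N) (Q B : Matrix (Fin N) (Fin N) ℝ)
    (hQ : Q.PosSemidef) (hH : Hormander Q B)
    (hmax : ∃ μ ∈ spectrum ℂ (B.map (Complex.ofReal : ℝ → ℂ)), (0:ℝ) ≤ μ.re) :
    ∃ c₀ > (0:ℝ), ∀ t ≥ (1:ℝ), c₀ * Real.sqrt t ≤ volFun Q B t := by
  classical
  have hFinNE : Nonempty (Fin N) := ⟨⟨0, hN⟩⟩
  -- extract a complex eigenvector of `Bᵀ` with eigenvalue of nonnegative real part
  obtain ⟨μ, hμmem, hμre⟩ := hmax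
  set Bc := B.map (Complex.ofReal : ℝ → ℂ) with hBcdef
  have hdet : (μ • (1 : Matrix (Fin N) (Fin N) ℂ) - Bc).det = 0 := by
    have h1 := spectrum.mem_iff.mp hμmem
    have h2 : algebraMap ℂ (Matrix (Fin N) (Fin N) ℂ) μ = μ • 1 :=
      Algebra.algebraMap_eq_smul_one μ
    rw [h2] at h1
    by_contra hne
    exact h1 ((Matrix.isUnit_iff_isUnit_det _).mpr (isUnit_iff_ne_zero.mpr hne))
  have hdetT : (μ • (1 : Matrix (Fin N) (Fin N) ℂ) - Bcᵀ).det = 0 := by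
    have h3 : (μ • (1 : Matrix (Fin N) (Fin N) ℂ) - Bc)ᵀ
        = μ • (1 : Matrix (Fin N) (Fin N) ℂ) - Bcᵀ := by
      rw [Matrix.transpose_sub, Matrix.transpose_smul, Matrix.transpose_one]
    rw [← h3, Matrix.det_transpose]
    exact hdet
  obtain ⟨v, hvne, hvz⟩ := (Matrix.exists_mulVec_eq_zero_iff).mpr hdetT
  have hv : Bcᵀ *ᵥ v = μ • v := by
    rw [Matrix.sub_mulVec, sub_eq_zero] at hvz
    rw [← hvz, Matrix.smul_mulVec, Matrix.one_mulVec]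
  set a : Fin N → ℝ := fun i => (v i).re with hadef
  set b : Fin N → ℝ := fun i => (v i).im with hbdef
  set q : ℝ := a ⬝ᵥ (Q *ᵥ a) + b ⬝ᵥ (Q *ᵥ b) with hqdef
  have hq0 : 0 ≤ q := add_nonneg (by simpa using hQ.dotProduct_mulVec_nonneg a) (by simpa using hQ.dotProduct_mulVec_nonneg b)
  have htK1 : (tK Q B 1).PosDef := by
    have h := hH 1 one_pos
    rwa [Kmat, inv_one, one_smul] at h
  -- the quadratic form along a and b
  have hquad : ∀ t : ℝ, a ⬝ᵥ (tK Q B t *ᵥ a) + b ⬝ᵥ (tK Q B t *ᵥ b)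
      = ∫ s in (0:ℝ)..t, Real.exp (2 * s * μ.re) * q := by
    intro t
    rw [show tK Q B t = Matrix.of fun i j => ∫ s in (0:ℝ)..t,
      (NormedSpace.exp (s • B) * Q * NormedSpace.exp (s • Bᵀ)) i j from rfl]
    rw [quad_integral, quad_integral]
    rw [← intervalIntegral.integral_add
      ((quadform_cont Q B a).intervalIntegrable _ _)
      ((quadform_cont Q B b).intervalIntegrable _ _)]
    apply intervalIntegral.integral_congr
    intro s _
    exact F_formula Q B μ v hv s
  have hqpos : 0 < q := by
    rcases hq0.lt_or_eq with h | h
    · exact h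
    exfalso
    have h1 := hquad 1
    rw [← h] at h1
    simp only [mul_zero, intervalIntegral.integral_const, smul_zero, sub_zero] at h1
    have hab : a ≠ 0 ∨ b ≠ 0 := by
      by_contra hcon
      push_neg at hcon
      apply hvne
      ext i
      have h4 : a i = 0 := by rw [hcon.1]; rfl
      have h5 : b i = 0 := by rw [hcon.2]; rfl
      exact Complex.ext h4 h5
    have hpa : 0 ≤ a ⬝ᵥ (tK Q B 1 *ᵥ a) := by simpa using htK1.posSemidef.dotProduct_mulVec_nonneg a
    have hpb : 0 ≤ b ⬝ᵥ (tK Q B 1 *ᵥ b) := by simpa using htK1.posSemidef.dotProduct_mulVec_nonneg b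
    rcases hab with ha | hb
    · have := htK1.dotProduct_mulVec_pos ha
      simp only [star_trivial] at this
      linarith
    · have := htK1.dotProduct_mulVec_pos hb
      simp only [star_trivial] at this
      linarith
  -- eigenvalues of tK(1)
  have hA1h : (tK Q B 1).IsHermitian := htK1.1
  obtain ⟨imin, -, hminmem⟩ :=
    Finset.exists_min_image Finset.univ hA1h.eigenvalues Finset.univ_nonempty
  set ε := hA1h.eigenvalues imin with hεdef
  have hmin : ∀ i, ε ≤ hA1h.eigenvalues i := fun i => hminmem i (Finset.mem_univ i)
  have hε : 0 < ε := htK1.eigenvalues_pos imin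
  -- norm of the eigenvector
  set nv : ℝ := a ⬝ᵥ a + b ⬝ᵥ b with hnvdef
  have hnv : 0 < nv := by
    obtain ⟨i0, hi0⟩ : ∃ i, v i ≠ 0 := by
      by_contra hcon
      push_neg at hcon
      exact hvne (funext hcon)
    have h1 : 0 < Complex.normSq (v i0) := Complex.normSq_pos.mpr hi0
    have h2 : ∀ i, Complex.normSq (v i) = a i * a i + b i * b i := by
      intro i; simp [Complex.normSq_apply, hadef, hbdef]
    have h3 : nv = ∑ i, Complex.normSq (v i) := by
      rw [hnvdef]
      simp only [dotProduct, h2]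
      rw [← Finset.sum_add_distrib]
    rw [h3]
    exact lt_of_lt_of_le h1 (Finset.single_le_sum
      (fun i _ => (Complex.normSq_nonneg (v i))) (Finset.mem_univ i0))
  -- conclusion setup
  set c₂ : ℝ := ε ^ (N - 1) * (q / nv) with hc₂def
  have hc₂ : 0 < c₂ := mul_pos (pow_pos hε _) (div_pos hqpos hnv)
  set ωN : ℝ := (volume (Metric.ball (0 : EuclideanSpace ℝ (Fin N)) 1)).toReal with hωdef
  have hω : 0 < ωN := ENNReal.toReal_pos
    (Metric.measure_ball_pos volume _ one_pos).ne' measure_ball_lt_top.ne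
  refine ⟨ωN * Real.sqrt c₂, mul_pos hω (Real.sqrt_pos.mpr hc₂), fun t ht => ?_⟩
  have ht0 : (0:ℝ) < t := lt_of_lt_of_le one_pos ht
  -- hermitian structure of tK(t)
  have hMh : (tK Q B t).IsHermitian := by
    have h := (hH t ht0).1
    have hM : tK Q B t = t • Kmat Q B t := by
      rw [Kmat, smul_smul, mul_inv_cancel₀ ht0.ne', one_smul]
    rw [hM]
    show (t • Kmat Q B t)ᴴ = t • Kmat Q B t
    rw [Matrix.conjTranspose_smul, h, star_trivial]
  -- monotonicity of the quadratic form
  have hmono : ∀ x : Fin N → ℝ, x ⬝ᵥ (tK Q B 1 *ᵥ x) ≤ x ⬝ᵥ (tK Q B t *ᵥ x) := by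
    intro x
    rw [show tK Q B t = Matrix.of fun i j => ∫ s in (0:ℝ)..t,
      (NormedSpace.exp (s • B) * Q * NormedSpace.exp (s • Bᵀ)) i j from rfl,
      show tK Q B 1 = Matrix.of fun i j => ∫ s in (0:ℝ)..(1:ℝ),
      (NormedSpace.exp (s • B) * Q * NormedSpace.exp (s • Bᵀ)) i j from rfl]
    rw [quad_integral, quad_integral]
    have hi1 : IntervalIntegrable (fun s : ℝ =>
        x ⬝ᵥ ((NormedSpace.exp (s • B) * Q * NormedSpace.exp (s • Bᵀ)) *ᵥ x))
        volume (0:ℝ) (1:ℝ) := (quadform_cont Q B x).intervalIntegrable _ _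
    have hi2 : IntervalIntegrable (fun s : ℝ =>
        x ⬝ᵥ ((NormedSpace.exp (s • B) * Q * NormedSpace.exp (s • Bᵀ)) *ᵥ x))
        volume (1:ℝ) t := (quadform_cont Q B x).intervalIntegrable _ _
    rw [← intervalIntegral.integral_add_adjacent_intervals hi1 hi2]
    have hpos : 0 ≤ ∫ s in (1:ℝ)..t,
        x ⬝ᵥ ((NormedSpace.exp (s • B) * Q * NormedSpace.exp (s • Bᵀ)) *ᵥ x) :=
      intervalIntegral.integral_nonneg ht (fun s _ => quad_G_nonneg hQ B s x)
    linarith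
  -- lower bound on all eigenvalues of tK(t)
  have hlow : ∀ i, ε ≤ hMh.eigenvalues i := by
    intro i
    have hnorm : (⇑(hMh.eigenvectorBasis i) : Fin N → ℝ) ⬝ᵥ ⇑(hMh.eigenvectorBasis i) = 1 :=
      eigbasis_dot_one hMh i
    have heig : hMh.eigenvalues i
        = (⇑(hMh.eigenvectorBasis i) : Fin N → ℝ) ⬝ᵥ (tK Q B t *ᵥ ⇑(hMh.eigenvectorBasis i)) :=
      eig_eq_real hMh i
    obtain ⟨y, hy1, hy2⟩ := quad_decomp hA1h (⇑(hMh.eigenvectorBasis i))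
    have h4 : ε ≤ (⇑(hMh.eigenvectorBasis i) : Fin N → ℝ)
        ⬝ᵥ (tK Q B 1 *ᵥ ⇑(hMh.eigenvectorBasis i)) := by
      rw [hy2]
      have h6 : ε * (y ⬝ᵥ y) ≤ ∑ j, hA1h.eigenvalues j * (y j)^2 := by
        rw [show (y ⬝ᵥ y) = ∑ j, (y j)^2 from by simp [dotProduct, pow_two],
          Finset.mul_sum]
        exact Finset.sum_le_sum fun j _ =>
          mul_le_mul_of_nonneg_right (hmin j) (sq_nonneg _)
      have h7 : y ⬝ᵥ y = 1 := by rw [hy1, hnorm]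
      rw [h7] at h6
      simpa using h6
    calc ε ≤ _ := h4
    _ ≤ _ := hmono _
    _ = hMh.eigenvalues i := heig.symm
  -- an eigenvalue of size at least q t / nv
  obtain ⟨imax, -, hmaximem⟩ :=
    Finset.exists_max_image Finset.univ hMh.eigenvalues Finset.univ_nonempty
  have hmaxi : ∀ i, hMh.eigenvalues i ≤ hMh.eigenvalues imax :=
    fun i => hmaximem i (Finset.mem_univ i)
  have hub : ∀ x : Fin N → ℝ,
      x ⬝ᵥ (tK Q B t *ᵥ x) ≤ hMh.eigenvalues imax * (x ⬝ᵥ x) := by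
    intro x
    obtain ⟨y, hy1, hy2⟩ := quad_decomp hMh x
    rw [hy2, ← hy1, show (y ⬝ᵥ y) = ∑ j, (y j)^2 from by simp [dotProduct, pow_two],
      Finset.mul_sum]
    exact Finset.sum_le_sum fun j _ =>
      mul_le_mul_of_nonneg_right (hmaxi j) (sq_nonneg _)
  have hgrow : q * t ≤ a ⬝ᵥ (tK Q B t *ᵥ a) + b ⬝ᵥ (tK Q B t *ᵥ b) := by
    rw [hquad t]
    have hconst : q * t = ∫ _ in (0:ℝ)..t, q := by
      rw [intervalIntegral.integral_const, sub_zero, smul_eq_mul, mul_comm]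
    rw [hconst]
    apply intervalIntegral.integral_mono_on ht0.le
      (intervalIntegrable_const)
      (Continuous.intervalIntegrable (by continuity) _ _)
    intro s hs
    have h1 : (1:ℝ) ≤ Real.exp (2 * s * μ.re) :=
      Real.one_le_exp (by nlinarith [hs.1])
    nlinarith
  have hmax2 : q * t ≤ hMh.eigenvalues imax * nv := by
    calc q * t ≤ a ⬝ᵥ (tK Q B t *ᵥ a) + b ⬝ᵥ (tK Q B t *ᵥ b) := hgrow
    _ ≤ hMh.eigenvalues imax * (a ⬝ᵥ a) + hMh.eigenvalues imax * (b ⬝ᵥ b) :=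
      add_le_add (hub a) (hub b)
    _ = hMh.eigenvalues imax * nv := by rw [hnvdef]; ring
  have hlmaxpos : 0 < hMh.eigenvalues imax := lt_of_lt_of_le hε (hlow imax)
  -- determinant lower bound
  have hdetM : c₂ * t ≤ (tK Q B t).det := by
    have hdet : (tK Q B t).det = ∏ i, hMh.eigenvalues i := det_eq_prod_real hMh
    rw [hdet, ← Finset.mul_prod_erase Finset.univ _ (Finset.mem_univ imax)]
    have hprod : ε ^ (N - 1) ≤ ∏ i ∈ Finset.univ.erase imax, hMh.eigenvalues i := by
      have h8 := Finset.prod_le_prod (s := Finset.univ.erase imax)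
        (f := fun _ => ε) (g := hMh.eigenvalues)
        (fun i _ => hε.le) (fun i _ => hlow i)
      simpa [Finset.prod_const, Finset.card_erase_of_mem, Finset.card_univ] using h8
    have hlt : q / nv * t ≤ hMh.eigenvalues imax := by
      rw [div_mul_eq_mul_div, div_le_iff₀ hnv]
      linarith
    calc c₂ * t = (q / nv * t) * ε ^ (N - 1) := by rw [hc₂def]; ring
    _ ≤ hMh.eigenvalues imax * ∏ i ∈ Finset.univ.erase imax, hMh.eigenvalues i :=
      mul_le_mul hlt hprod (pow_nonneg hε.le _) hlmaxpos.le
  -- conclusion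
  have h1 : Real.sqrt (c₂ * t) ≤ Real.sqrt ((tK Q B t).det) := Real.sqrt_le_sqrt hdetM
  rw [Real.sqrt_mul hc₂.le] at h1
  have h2 : ωN * (Real.sqrt c₂ * Real.sqrt t) ≤ ωN * Real.sqrt ((tK Q B t).det) :=
    mul_le_mul_of_nonneg_left h1 hω.le
  calc ωN * Real.sqrt c₂ * Real.sqrt t = ωN * (Real.sqrt c₂ * Real.sqrt t) := by ring
  _ ≤ ωN * Real.sqrt ((tK Q B t).det) := h2
  _ = volFun Q B t := rfl
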